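/- A unitary 2-design {U_1,…,U_D} on H_N is a (k,ε)-quantum spectral extractor with output size m = (n+k)/2 − log(1/√ε): for all operators X on H_N, ⟨X, (ψ†∘ψ − τ†∘τ)(X)⟩ ≤ (|M|/(|N|·|D|))·⟨X,X⟩, where ψ(ρ) = (1/D) Σ_i tr_{N\M}[U_i ρ U_i†] ⊗ |i⟩⟨i| and τ(ρ) = tr[ρ]·(1_M/|M|) ⊗ (1_D/|D|), hence λ_max(ψ†∘ψ − τ†∘τ) ≤ |M|/(|N|·|D|). -/

import Mathlib

open Matrix Finset
open scoped Kronecker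

/-- The swap operator `F` on `H ⊗ H`. -/
noncomputable def swapMat (H : Type) [Fintype H] [DecidableEq H] :
    Matrix (H × H) (H × H) ℂ :=
  Matrix.of fun a b => if a.1 = b.2 ∧ a.2 = b.1 then 1 else 0

/-- A unitary 2-design: the averaged 2-fold twirl `(1/L) Σ_i U_i^{⊗2} A (U_i†)^{⊗2}` equals
the Haar average `∫ U^{⊗2} A (U†)^{⊗2} dU`, written in its closed form as the projection
onto `span{1, F}`. -/
noncomputable def IsUnitary2Design {H L : Type} [Fintype H] [DecidableEq H] [Fintype L]
    (U : L → Matrix H H ℂ) : Prop :=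
  (∀ i, U i ∈ Matrix.unitaryGroup H ℂ) ∧
  ∀ A : Matrix (H × H) (H × H) ℂ,
    (Fintype.card L : ℂ)⁻¹ • ∑ i, (U i ⊗ₖ U i) * A * (U i ⊗ₖ U i)ᴴ =
      (((Fintype.card H : ℂ) * A.trace - (A * swapMat H).trace) /
          ((Fintype.card H : ℂ) ^ 3 - (Fintype.card H : ℂ))) • (1 : Matrix (H × H) (H × H) ℂ)
      + (((Fintype.card H : ℂ) * (A * swapMat H).trace - A.trace) /
          ((Fintype.card H : ℂ) ^ 3 - (Fintype.card H : ℂ))) • swapMat H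

/-- Squared Hilbert–Schmidt norm. -/
noncomputable def hsNormSq {n : Type} [Fintype n] (A : Matrix n n ℂ) : ℝ :=
  ((Aᴴ * A).trace).re

noncomputable def Smat (M J : Type) [Fintype M] [DecidableEq M] [Fintype J] [DecidableEq J] :
    Matrix ((M × J) × (M × J)) ((M × J) × (M × J)) ℂ :=
  Matrix.of fun p q => if p.1 = (q.2.1, q.1.2) ∧ p.2 = (q.1.1, q.2.2) then 1 else 0

lemma pair_eq_iff {A B : Type*} (q : A × B) (c : A) (d : B) :
    (q.1 = c ∧ q.2 = d) ↔ q = (c, d) := by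
  cases q; simp [Prod.ext_iff]

variable {M J : Type} [Fintype M] [DecidableEq M] [Fintype J] [DecidableEq J]

lemma kron_conjT {H : Type} [Fintype H] [DecidableEq H] (A B : Matrix H H ℂ) :
    (A ⊗ₖ B)ᴴ = Aᴴ ⊗ₖ Bᴴ := by
  ext p q; simp [conjTranspose_apply, kroneckerMap_apply]

lemma trace_kron_mul_Smat (A B : Matrix (M × J) (M × J) ℂ) :
    ((A ⊗ₖ B) * Smat M J).trace
      = ∑ m : M, ∑ m' : M, (∑ j : J, A (m, j) (m', j)) * (∑ j : J, B (m', j) (m, j)) := by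
  simp only [Matrix.trace, Matrix.diag, Matrix.mul_apply, Smat, Matrix.of_apply,
    kroneckerMap_apply, mul_ite, mul_one, mul_zero, pair_eq_iff]
  simp only [Finset.sum_ite_eq', Finset.mem_univ, if_true]
  simp only [Finset.sum_mul_sum]
  simp only [Fintype.sum_prod_type]
  exact Finset.sum_congr rfl fun m _ => by rw [Finset.sum_comm]

lemma trace_kron_mul_swap {H : Type} [Fintype H] [DecidableEq H] (A B : Matrix H H ℂ) :
    ((A ⊗ₖ B) * swapMat H).trace = (A * B).trace := by
  simp only [Matrix.trace, Matrix.diag, Matrix.mul_apply, swapMat, Matrix.of_apply,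
    kroneckerMap_apply, mul_ite, mul_one, mul_zero, pair_eq_iff]
  simp only [Fintype.sum_prod_type, Finset.sum_ite_eq', Finset.sum_ite_eq,
    Finset.mem_univ, if_true]

lemma trace_Smat : (Smat M J).trace = ((Fintype.card M : ℂ) * (Fintype.card J : ℂ) ^ 2) := by
  simp only [Matrix.trace, Matrix.diag, Smat, Matrix.of_apply, Prod.ext_iff]
  simp only [Fintype.sum_prod_type, and_true]
  simp only [show ∀ x x1 : M, (x = x1 ∧ x1 = x) ↔ x1 = x from
    fun x x1 => ⟨fun h => h.2, fun h => ⟨h.symm, h⟩⟩]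
  simp only [Finset.sum_ite_eq', Finset.mem_univ, if_true, Finset.sum_const,
    Finset.card_univ, nsmul_eq_mul, mul_one, mul_ite, mul_zero]
  ring

lemma swap_pair_eq_iff {A : Type*} (p q : A × A) :
    (p.1 = q.2 ∧ p.2 = q.1) ↔ q = (p.2, p.1) := by
  cases p; cases q; simp [Prod.ext_iff]; tauto

lemma trace_swap_mul_Smat :
    (swapMat (M × J) * Smat M J).trace = ((Fintype.card M : ℂ) ^ 2 * (Fintype.card J : ℂ)) := by
  simp only [Matrix.trace, Matrix.diag, Matrix.mul_apply, swapMat, Smat, Matrix.of_apply,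
    ite_mul, one_mul, zero_mul, swap_pair_eq_iff]
  simp only [Finset.sum_ite_eq', Finset.mem_univ, if_true]
  simp only [Prod.ext_iff, and_true, true_and, and_self, eq_self_iff_true]
  simp only [show ∀ x x1 : J, (x = x1 ∧ x1 = x) ↔ x1 = x from
    fun x x1 => ⟨fun h => h.2, fun h => ⟨h.symm, h⟩⟩]
  simp only [Fintype.sum_prod_type]
  simp only [Finset.sum_ite_eq, Finset.sum_ite_eq', Finset.mem_univ, if_true, Finset.sum_const,
    Finset.card_univ, nsmul_eq_mul, mul_one, mul_ite, mul_zero]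
  push_cast
  ring

lemma psi_trace {M J D : Type} [Fintype M] [DecidableEq M] [Fintype J] [DecidableEq J]
    [Fintype D] [DecidableEq D] (Y : D → Matrix (M × J) (M × J) ℂ) :
    (((Matrix.of fun (mi : M × D) (mi' : M × D) =>
        if mi.2 = mi'.2 then
          ((Fintype.card D : ℂ))⁻¹ * ∑ t : J, (Y mi.2) (mi.1, t) (mi'.1, t)
        else 0))ᴴ *
      (Matrix.of fun (mi : M × D) (mi' : M × D) =>
        if mi.2 = mi'.2 then
          ((Fintype.card D : ℂ))⁻¹ * ∑ t : J, (Y mi.2) (mi.1, t) (mi'.1, t)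
        else 0)).trace
    = (Fintype.card D : ℂ)⁻¹ *
        ((Fintype.card D : ℂ)⁻¹ * ∑ i, (((Y i)ᴴ ⊗ₖ (Y i)) * Smat M J).trace) := by
  simp only [trace_kron_mul_Smat]
  simp only [Matrix.trace, Matrix.diag, Matrix.mul_apply, Matrix.conjTranspose_apply,
    Matrix.of_apply]
  have hs : ∀ (p : Prop) (inst : Decidable p) (x : ℂ), star (if p then x else 0) = if p then star x else 0 := by
    intro p i x; split <;> simp
  simp only [hs]
  simp only [ite_mul, mul_ite, zero_mul, mul_zero, ← ite_and, and_self]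
  simp only [Fintype.sum_prod_type]
  simp only [Finset.sum_ite_eq, Finset.sum_ite_eq', Finset.mem_univ, if_true]
  simp only [Finset.mul_sum]
  rw [Finset.sum_comm]
  refine Finset.sum_congr rfl fun i _ => ?_
  refine Finset.sum_congr rfl fun m _ => ?_
  refine Finset.sum_congr rfl fun m' _ => ?_
  simp only [star_mul', star_inv₀, star_natCast, star_sum]
  refine Finset.sum_congr rfl fun j _ => ?_
  rw [← Finset.mul_sum]
  ring

lemma tau_trace {M D : Type} [Fintype M] [DecidableEq M] [Fintype D] [DecidableEq D]
    (c : ℂ) :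
    (((Matrix.of fun (mi : M × D) (mi' : M × D) => if mi = mi' then c else 0))ᴴ *
      (Matrix.of fun (mi : M × D) (mi' : M × D) => if mi = mi' then c else 0)).trace
    = ((Fintype.card M : ℂ) * (Fintype.card D : ℂ)) * ((starRingEnd ℂ) c * c) := by
  simp only [Matrix.trace, Matrix.diag, Matrix.mul_apply, Matrix.conjTranspose_apply,
    Matrix.of_apply]
  have hs : ∀ (p : Prop) (inst : Decidable p) (x : ℂ), star (if p then x else 0) = if p then star x else 0 := by
    intro p i x; split <;> simp
  simp only [hs]
  simp only [ite_mul, mul_ite, zero_mul, mul_zero, ← ite_and, and_self]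
  simp only [Finset.sum_ite_eq, Finset.sum_ite_eq', Finset.mem_univ, if_true]
  simp [Finset.sum_const, Finset.card_univ, Fintype.card_prod, Complex.star_def]

lemma trace_conjT_mul {H : Type} [Fintype H] [DecidableEq H] (X : Matrix H H ℂ) :
    (Xᴴ * X).trace = ((∑ p : H, ∑ q : H, Complex.normSq (X q p) : ℝ) : ℂ) := by
  simp only [Matrix.trace, Matrix.diag, Matrix.mul_apply, Matrix.conjTranspose_apply,
    Complex.star_def, ← Complex.normSq_eq_conj_mul_self]
  push_cast
  rfl

set_option maxHeartbeats 1000000 in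
/-- a unitary 2-design `{U_1,…,U_D}` on `H_N = H_M ⊗ H_{N\M}` is a
(k,ε)-quantum spectral extractor with `m = (n+k)/2 − log(1/√ε)`: for all operators `X`,
`⟨X, (ψ†∘ψ − τ†∘τ)(X)⟩ ≤ (|M|/(|N||D|))·⟨X,X⟩`, i.e.
`λ_max(ψ†∘ψ − τ†∘τ) ≤ |M|/(|N||D|)` for the extractor map
`ψ(ρ) = (1/D) Σ_i tr_{N\M}[U_i ρ U_i†] ⊗ |i⟩⟨i|` and `τ(ρ) = tr[ρ]·1_{MD}/(|M||D|)`. -/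
theorem unitary_2_design_is_quantum_spectral_extractor
    {M J D : Type} [Fintype M] [DecidableEq M] [Fintype J] [DecidableEq J]
    [Fintype D] [DecidableEq D] [Nonempty M] [Nonempty J] [Nonempty D]
    (U : D → Matrix (M × J) (M × J) ℂ) (hU : IsUnitary2Design U) :
    ∀ X : Matrix (M × J) (M × J) ℂ,
      hsNormSq (Matrix.of fun (mi : M × D) (mi' : M × D) =>
          if mi.2 = mi'.2 then
            ((Fintype.card D : ℂ))⁻¹ * ∑ t : J, (U mi.2 * X * (U mi.2)ᴴ) (mi.1, t) (mi'.1, t)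
          else 0)
      - hsNormSq (Matrix.of fun (mi : M × D) (mi' : M × D) =>
          if mi = mi' then X.trace / ((Fintype.card M : ℂ) * (Fintype.card D : ℂ)) else 0)
      ≤ (Fintype.card M : ℝ) / ((Fintype.card (M × J) : ℝ) * (Fintype.card D : ℝ)) *
          hsNormSq X := by
  intro X
  by_cases hone : Fintype.card (M × J) = 1
  · exfalso
    have h1 := hU.2 1
    have hterm : ∀ i : D,
        (U i ⊗ₖ U i) * (1 : Matrix ((M × J) × (M × J)) ((M × J) × (M × J)) ℂ) * (U i ⊗ₖ U i)ᴴ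
          = 1 := by
      intro i
      rw [mul_one, kron_conjT, ← Matrix.mul_kronecker_mul]
      have hu := (Matrix.mem_unitaryGroup_iff).mp (hU.1 i)
      rw [Matrix.star_eq_conjTranspose] at hu
      rw [hu, Matrix.one_kronecker_one]
    simp only [hterm, Finset.sum_const, Finset.card_univ, hone] at h1
    have hD : (Fintype.card D : ℂ) ≠ 0 := by
      exact_mod_cast Nat.cast_ne_zero.mpr Fintype.card_ne_zero
    rw [← Nat.cast_smul_eq_nsmul ℂ, smul_smul, inv_mul_cancel₀ hD, one_smul] at h1
    norm_num at h1
  · have hn2 : 2 ≤ Fintype.card (M × J) := by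
      have := Fintype.card_pos (α := M × J); omega
    have hterm : ∀ i : D, (U i ⊗ₖ U i) * (Xᴴ ⊗ₖ X) * (U i ⊗ₖ U i)ᴴ
        = (U i * X * (U i)ᴴ)ᴴ ⊗ₖ (U i * X * (U i)ᴴ) := by
      intro i
      rw [kron_conjT, Matrix.mul_assoc, ← Matrix.mul_kronecker_mul, ← Matrix.mul_kronecker_mul]
      simp [Matrix.conjTranspose_mul, Matrix.mul_assoc]
    have design := hU.2 (Xᴴ ⊗ₖ X)
    simp only [hterm] at design
    have key := congrArg
      (fun B : Matrix ((M × J) × (M × J)) ((M × J) × (M × J)) ℂ => (B * Smat M J).trace) design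
    simp only [Matrix.smul_mul, Matrix.add_mul, Matrix.one_mul, Finset.sum_mul,
      Matrix.trace_smul, Matrix.trace_add, Matrix.trace_sum, trace_Smat, trace_swap_mul_Smat,
      Matrix.trace_kronecker, trace_kron_mul_swap, Matrix.trace_conjTranspose,
      smul_eq_mul] at key
    simp only [Fintype.card_prod, Nat.cast_mul] at key
    have hconj : star X.trace * X.trace = ((Complex.normSq X.trace : ℝ) : ℂ) := by
      rw [Complex.star_def, ← Complex.normSq_eq_conj_mul_self]
    have hXt : (Xᴴ * X).trace
        = ((∑ p : M × J, ∑ q : M × J, Complex.normSq (X q p) : ℝ) : ℂ) := trace_conjT_mul X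
    rw [hconj, hXt] at key
    have hpsi := psi_trace (M := M) (J := J) (D := D) (fun i => U i * X * (U i)ᴴ)
    set cR : ℝ := Complex.normSq X.trace with hcR
    set sR : ℝ := ∑ p : M × J, ∑ q : M × J, Complex.normSq (X q p) with hsRdef
    set A : ℝ := (Fintype.card M : ℝ) with hA
    set B : ℝ := (Fintype.card J : ℝ) with hB
    set Dd : ℝ := (Fintype.card D : ℝ) with hDd
    have hψC : ((Matrix.of fun (mi : M × D) (mi' : M × D) =>
        if mi.2 = mi'.2 then
          ((Fintype.card D : ℂ))⁻¹ * ∑ t : J, (U mi.2 * X * (U mi.2)ᴴ) (mi.1, t) (mi'.1, t)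
        else 0)ᴴ *
        (Matrix.of fun (mi : M × D) (mi' : M × D) =>
        if mi.2 = mi'.2 then
          ((Fintype.card D : ℂ))⁻¹ * ∑ t : J, (U mi.2 * X * (U mi.2)ᴴ) (mi.1, t) (mi'.1, t)
        else 0)).trace
        = ((((A * B * cR - sR) / ((A * B) ^ 3 - A * B) * (A * B ^ 2)
            + (A * B * sR - cR) / ((A * B) ^ 3 - A * B) * (A ^ 2 * B)) / Dd : ℝ) : ℂ) := by
      rw [hpsi, key]
      simp only [hA, hB, hDd]
      push_cast
      ring
    have hτC : ((Matrix.of fun (mi : M × D) (mi' : M × D) =>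
        if mi = mi' then X.trace / ((Fintype.card M : ℂ) * (Fintype.card D : ℂ)) else 0)ᴴ *
        (Matrix.of fun (mi : M × D) (mi' : M × D) =>
        if mi = mi' then X.trace / ((Fintype.card M : ℂ) * (Fintype.card D : ℂ)) else 0)).trace
        = ((A * Dd * (cR / (A * Dd) ^ 2) : ℝ) : ℂ) := by
      rw [tau_trace, ← Complex.normSq_eq_conj_mul_self]
      simp only [Complex.normSq_div, Complex.normSq_mul, Complex.normSq_natCast, hA, hB, hDd]
      push_cast
      ring
    simp only [hsNormSq, hψC, hτC, Complex.ofReal_re, Fintype.card_prod, Nat.cast_mul, hXt]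
    rw [← hA, ← hB]
    have hA1 : (1:ℝ) ≤ A := by rw [hA]; exact_mod_cast Fintype.card_pos
    have hB1 : (1:ℝ) ≤ B := by rw [hB]; exact_mod_cast Fintype.card_pos
    have hD1 : (1:ℝ) ≤ Dd := by rw [hDd]; exact_mod_cast Fintype.card_pos
    have hN2 : (2:ℝ) ≤ A * B := by
      rw [hA, hB, ← Nat.cast_mul]
      exact_mod_cast (by simpa [Fintype.card_prod] using hn2 : 2 ≤ Fintype.card M * Fintype.card J)
    have hcR0 : 0 ≤ cR := Complex.normSq_nonneg _
    have hsR0 : 0 ≤ sR := Finset.sum_nonneg fun _ _ =>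
      Finset.sum_nonneg fun _ _ => Complex.normSq_nonneg _
    have hA0 : A ≠ 0 := by linarith
    have hB0 : B ≠ 0 := by linarith
    have hD0 : Dd ≠ 0 := by linarith
    have hNpos : (0:ℝ) < A * B := by linarith
    have hN0 : A * B ≠ 0 := ne_of_gt hNpos
    have hP2pos : (0:ℝ) < (A * B) ^ 2 - 1 := by nlinarith
    have hP2 : (A * B) ^ 2 - 1 ≠ 0 := ne_of_gt hP2pos
    have hP3pos : (0:ℝ) < (A * B) ^ 3 - A * B := by nlinarith [mul_pos hNpos hP2pos]
    have hP3 : (A * B) ^ 3 - A * B ≠ 0 := ne_of_gt hP3pos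
    have hAD : (A * Dd) ^ 2 ≠ 0 := by positivity
    have hid : A / (A * B * Dd) * sR -
        (((A * B * cR - sR) / ((A * B) ^ 3 - A * B) * (A * B ^ 2)
          + (A * B * sR - cR) / ((A * B) ^ 3 - A * B) * (A ^ 2 * B)) / Dd
          - A * Dd * (cR / (A * Dd) ^ 2))
        = (1 / Dd) * (cR * (A ^ 2 - 1) / (A * ((A * B) ^ 2 - 1))
            + sR * (A * (B ^ 2 - 1)) / ((A * B) * ((A * B) ^ 2 - 1))) := by
      rw [show (A * B) ^ 3 - A * B = (A * B) * ((A * B) ^ 2 - 1) by ring]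
      generalize hP : (A * B) ^ 2 - 1 = P at hP2 ⊢
      field_simp
      rw [← hP]
      ring
    have t1 : 0 ≤ cR * (A ^ 2 - 1) / (A * ((A * B) ^ 2 - 1)) :=
      div_nonneg (mul_nonneg hcR0 (by nlinarith)) (by nlinarith)
    have t2 : 0 ≤ sR * (A * (B ^ 2 - 1)) / ((A * B) * ((A * B) ^ 2 - 1)) :=
      div_nonneg (mul_nonneg hsR0 (mul_nonneg (by linarith) (by nlinarith))) (by nlinarith)
    have hnn : 0 ≤ (1 / Dd) * (cR * (A ^ 2 - 1) / (A * ((A * B) ^ 2 - 1))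
        + sR * (A * (B ^ 2 - 1)) / ((A * B) * ((A * B) ^ 2 - 1))) := by
      apply mul_nonneg _ (add_nonneg t1 t2)
      positivity
    linarith [hid, hnn]
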